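/- arXiv:1711.02880 — 2 statements merged into one kernel-verified Lean document; each statement's English description precedes it below -/
import Mathlib

section
/- In a line pool, suppose G(λ) < ∞. Then the probability that the system is empty satisfies ψ = ( M(K) − Λ(I) ) / ( ∑_{k=1}^{K} μ_k / ( ψ_{|1..k−1} · ψ_{|k+1..K} ) ). -/
open scoped BigOperators ENNReal NNReal

/-- The balance function of balanced fairness: `Φ(0) = 1` and
`Φ(x) = (∑_{i : x_i > 0} Φ(x - e_i)) / M(⋃_{i : x_i > 0} 𝒦_i)`. -/
noncomputable def Phi {I K : Type} [Fintype I] [DecidableEq I] [DecidableEq K]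
    (μ : K → ℝ) (Ka : I → Finset K) (x : I → ℕ) : ℝ :=
  if x = fun _ => 0 then 1
  else (∑ i ∈ (Finset.univ.filter (fun i => 0 < x i)).attach,
      Phi μ Ka (Function.update x i.1 (x i.1 - 1))) /
    (∑ k ∈ (Finset.univ.filter (fun i => 0 < x i)).biUnion Ka, μ k)
termination_by ∑ i, x i
decreasing_by
  have hi := i.2
  simp only [Finset.mem_filter] at hi
  apply Finset.sum_lt_sum
  · intro j _
    rcases eq_or_ne j i.1 with rfl | h
    · simp [Function.update_self]
    · rw [Function.update_of_ne h]
  · exact ⟨i.1, Finset.mem_univ i.1, by simp [Function.update_self]; omega⟩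

/-- The normalization series `G(λ) = ∑_{x∈ℕ^I} Φ(x) λ^x` (as a real tsum). -/
noncomputable def Gf {I K : Type} [Fintype I] [DecidableEq I] [DecidableEq K]
    (μ : K → ℝ) (Ka : I → Finset K) (lam : I → ℝ) : ℝ :=
  ∑' x : I → ℕ, Phi μ Ka x * ∏ i, lam i ^ x i

/-- Classes of a line pool with `K` servers `0, …, K−1`: intervals `(i, j)`, `i ≤ j`. -/
abbrev LineCls (K : ℕ) : Type := {p : Fin K × Fin K // p.1 ≤ p.2}

/-- The servers `{i, …, j}` assigned to the class `(i, j)` of a line pool. -/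
def lineKa {K : ℕ} (c : LineCls K) : Finset (Fin K) := Finset.Icc c.1.1 c.1.2

/-- Arrival rates of the line system restricted to the servers `a, …, b`: only the
classes `(i,j)` with `a ≤ i` and `j ≤ b` are kept (integer bounds, so that empty ranges
are allowed). -/
noncomputable def lineLamRange {K : ℕ} (lam : LineCls K → ℝ) (a b : ℤ)
    (c : LineCls K) : ℝ :=
  if a ≤ ((c.1.1 : ℕ) : ℤ) ∧ ((c.1.2 : ℕ) : ℤ) ≤ b then lam c else 0

/-- Empty probability `ψ_{|a..b}` of the line system restricted to the servers `a, …, b`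
(equal to `1` when `a > b`, since then no class remains). -/
noncomputable def linePsiRange {K : ℕ} (μ : Fin K → ℝ) (lam : LineCls K → ℝ)
    (a b : ℤ) : ℝ :=
  (Gf μ lineKa (lineLamRange lam a b))⁻¹

section Aux

variable {I K : Type} [Fintype I] [DecidableEq I] [DecidableEq K]
  (μ : K → ℝ) (Ka : I → Finset K)

lemma Phi_zero : Phi μ Ka (fun _ => 0) = 1 := by
  rw [Phi]
  simp

lemma Phi_ne_zero (x : I → ℕ) (hx : x ≠ fun _ => 0) :
    Phi μ Ka x = (∑ i ∈ Finset.univ.filter (fun i => 0 < x i),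
      Phi μ Ka (Function.update x i (x i - 1))) /
      (∑ k ∈ (Finset.univ.filter (fun i => 0 < x i)).biUnion Ka, μ k) := by
  rw [Phi, if_neg hx, Finset.sum_attach _ (fun i => Phi μ Ka (Function.update x i (x i - 1)))]

lemma sum_update_lt (x : I → ℕ) (i : I) (h : 0 < x i) :
    ∑ j, Function.update x i (x i - 1) j < ∑ j, x j := by
  apply Finset.sum_lt_sum
  · intro j _
    rcases eq_or_ne j i with rfl | hne
    · simp [Function.update_self]
    · rw [Function.update_of_ne hne]
  · exact ⟨i, Finset.mem_univ i, by simp [Function.update_self]; omega⟩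

lemma Phi_nonneg (hμ : ∀ k, 0 ≤ μ k) (x : I → ℕ) : 0 ≤ Phi μ Ka x := by
  generalize hn : (∑ i, x i) = n
  induction n using Nat.strong_induction_on generalizing x with
  | _ n IH =>
    by_cases hx : x = fun _ => 0
    · rw [hx, Phi_zero]; norm_num
    · rw [Phi_ne_zero μ Ka x hx]
      apply div_nonneg
      · apply Finset.sum_nonneg
        intro i hi
        simp only [Finset.mem_filter] at hi
        exact IH _ (hn ▸ sum_update_lt x i hi.2) _ rfl
      · exact Finset.sum_nonneg fun k _ => hμ k

lemma Phi_mul_denom (x : I → ℕ) (hx : x ≠ fun _ => 0)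
    (hd : (∑ k ∈ (Finset.univ.filter (fun i => 0 < x i)).biUnion Ka, μ k) ≠ 0) :
    Phi μ Ka x * (∑ k ∈ (Finset.univ.filter (fun i => 0 < x i)).biUnion Ka, μ k) =
      ∑ i ∈ Finset.univ.filter (fun i => 0 < x i),
        Phi μ Ka (Function.update x i (x i - 1)) := by
  rw [Phi_ne_zero μ Ka x hx, div_mul_cancel₀ _ hd]

lemma denom_pos (hμ : ∀ k, 0 < μ k) (hKa : ∀ c, (Ka c).Nonempty)
    (x : I → ℕ) (hx : x ≠ fun _ => 0) :
    0 < ∑ k ∈ (Finset.univ.filter (fun i => 0 < x i)).biUnion Ka, μ k := by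
  apply Finset.sum_pos (fun k _ => hμ k)
  obtain ⟨i, hi⟩ : ∃ i, 0 < x i := by
    by_contra h
    push_neg at h
    exact hx (funext fun i => Nat.le_zero.mp (h i))
  obtain ⟨k, hk⟩ := hKa i
  exact ⟨k, Finset.mem_biUnion.mpr ⟨i, Finset.mem_filter.mpr ⟨Finset.mem_univ i, hi⟩, hk⟩⟩

lemma Phi_add_of_disjoint (hμ : ∀ k, 0 < μ k) (hKa : ∀ c, (Ka c).Nonempty)
    (y z : I → ℕ)
    (hd : Disjoint ((Finset.univ.filter fun i => 0 < y i).biUnion Ka)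
      ((Finset.univ.filter fun i => 0 < z i).biUnion Ka)) :
    Phi μ Ka (fun i => y i + z i) = Phi μ Ka y * Phi μ Ka z := by
  generalize hn : (∑ i, (y i + z i)) = n
  induction n using Nat.strong_induction_on generalizing y z with
  | _ n IH =>
    by_cases hy : y = fun _ => 0
    · subst hy
      simp only [zero_add]
      rw [Phi_zero, one_mul]
    by_cases hz : z = fun _ => 0
    · subst hz
      simp only [add_zero]
      rw [Phi_zero, mul_one]
    -- disjoint supports
    have hsupp : ∀ i, ¬(0 < y i ∧ 0 < z i) := by
      intro i ⟨h1, h2⟩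
      obtain ⟨k, hk⟩ := hKa i
      have hky : k ∈ (Finset.univ.filter fun i => 0 < y i).biUnion Ka :=
        Finset.mem_biUnion.mpr ⟨i, Finset.mem_filter.mpr ⟨Finset.mem_univ i, h1⟩, hk⟩
      have hkz : k ∈ (Finset.univ.filter fun i => 0 < z i).biUnion Ka :=
        Finset.mem_biUnion.mpr ⟨i, Finset.mem_filter.mpr ⟨Finset.mem_univ i, h2⟩, hk⟩
      exact (Finset.disjoint_left.mp hd hky) hkz
    have hsd : Disjoint (Finset.univ.filter fun i => 0 < y i)
        (Finset.univ.filter fun i => 0 < z i) := by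
      rw [Finset.disjoint_left]
      intro i hi hi'
      simp only [Finset.mem_filter] at hi hi'
      exact hsupp i ⟨hi.2, hi'.2⟩
    have hx : (fun i => y i + z i) ≠ fun _ => 0 := by
      intro h
      apply hy
      funext i
      have := congrFun h i
      omega
    have hsuppx : (Finset.univ.filter fun i => 0 < y i + z i) =
        (Finset.univ.filter fun i => 0 < y i) ∪ (Finset.univ.filter fun i => 0 < z i) := by
      ext i
      simp only [Finset.mem_filter, Finset.mem_union, Finset.mem_univ, true_and]
      omega
    set Dy := ∑ k ∈ (Finset.univ.filter fun i => 0 < y i).biUnion Ka, μ k with hDy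
    set Dz := ∑ k ∈ (Finset.univ.filter fun i => 0 < z i).biUnion Ka, μ k with hDz
    have hDyp : 0 < Dy := denom_pos μ Ka hμ hKa y hy
    have hDzp : 0 < Dz := denom_pos μ Ka hμ hKa z hz
    have hdenx : (∑ k ∈ ((Finset.univ.filter fun i => 0 < (fun i => y i + z i) i).biUnion Ka), μ k)
        = Dy + Dz := by
      have hbu : ((Finset.univ.filter fun i => 0 < y i) ∪
          (Finset.univ.filter fun i => 0 < z i)).biUnion Ka =
          ((Finset.univ.filter fun i => 0 < y i).biUnion Ka) ∪
          ((Finset.univ.filter fun i => 0 < z i).biUnion Ka) := by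
        ext k
        simp only [Finset.mem_biUnion, Finset.mem_union]
        constructor
        · rintro ⟨i, hi | hi, hk⟩
          · exact Or.inl ⟨i, hi, hk⟩
          · exact Or.inr ⟨i, hi, hk⟩
        · rintro (⟨i, hi, hk⟩ | ⟨i, hi, hk⟩)
          · exact ⟨i, Or.inl hi, hk⟩
          · exact ⟨i, Or.inr hi, hk⟩
      rw [show (Finset.filter (fun i => 0 < (fun i => y i + z i) i) Finset.univ) = (Finset.filter (fun i => 0 < y i + z i) Finset.univ) from rfl, hsuppx, hbu, Finset.sum_union hd]
    rw [Phi_ne_zero μ Ka _ hx, hdenx,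
      show (Finset.filter (fun i => 0 < (fun i => y i + z i) i) Finset.univ) = (Finset.filter (fun i => 0 < y i + z i) Finset.univ) from rfl,
      hsuppx, Finset.sum_union hsd]
    -- left sum
    have hyterm : ∀ i ∈ Finset.univ.filter fun i => 0 < y i,
        Phi μ Ka (Function.update (fun i => y i + z i) i (y i + z i - 1)) =
        Phi μ Ka (Function.update y i (y i - 1)) * Phi μ Ka z := by
      intro i hi
      simp only [Finset.mem_filter] at hi
      have hzc : z i = 0 := by
        by_contra h
        exact hsupp i ⟨hi.2, Nat.pos_of_ne_zero h⟩
      have key : Function.update (fun j => y j + z j) i (y i + z i - 1) =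
          fun j => Function.update y i (y i - 1) j + z j := by
        funext j
        rcases eq_or_ne j i with rfl | hne
        · simp only [Function.update_self, hzc, add_zero]
        · simp [Function.update_of_ne hne]
      rw [key]
      apply IH _ _ _ _ _ rfl
      · -- smaller
        rw [← hn]
        calc ∑ j, (Function.update y i (y i - 1) j + z j)
            = ∑ j, Function.update (fun j => y j + z j) i (y i + z i - 1) j := by
              congr 1; funext j
              rcases eq_or_ne j i with rfl | hne
              · simp only [Function.update_self, hzc, add_zero]
              · simp [Function.update_of_ne hne]
          _ < ∑ j, (y j + z j) := sum_update_lt _ i (by omega)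
      · -- disjointness preserved
        apply Disjoint.mono_left _ hd
        apply Finset.biUnion_subset_biUnion_of_subset_left
        intro j hj
        simp only [Finset.mem_filter, Finset.mem_univ, true_and] at hj ⊢
        rcases eq_or_ne j i with rfl | hne
        · exact hi.2
        · rwa [Function.update_of_ne hne] at hj
    have hzterm : ∀ i ∈ Finset.univ.filter fun i => 0 < z i,
        Phi μ Ka (Function.update (fun i => y i + z i) i (y i + z i - 1)) =
        Phi μ Ka y * Phi μ Ka (Function.update z i (z i - 1)) := by
      intro i hi
      simp only [Finset.mem_filter] at hi
      have hyc : y i = 0 := by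
        by_contra h
        exact hsupp i ⟨Nat.pos_of_ne_zero h, hi.2⟩
      have key : Function.update (fun j => y j + z j) i (y i + z i - 1) =
          fun j => y j + Function.update z i (z i - 1) j := by
        funext j
        rcases eq_or_ne j i with rfl | hne
        · simp only [Function.update_self, hyc, zero_add]
        · simp [Function.update_of_ne hne]
      rw [key]
      apply IH _ _ _ _ _ rfl
      · rw [← hn]
        calc ∑ j, (y j + Function.update z i (z i - 1) j)
            = ∑ j, Function.update (fun j => y j + z j) i (y i + z i - 1) j := by
              congr 1; funext j
              rcases eq_or_ne j i with rfl | hne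
              · simp only [Function.update_self, hyc, zero_add]
              · simp [Function.update_of_ne hne]
          _ < ∑ j, (y j + z j) := sum_update_lt _ i (by omega)
      · apply Disjoint.mono_right _ hd
        apply Finset.biUnion_subset_biUnion_of_subset_left
        intro j hj
        simp only [Finset.mem_filter, Finset.mem_univ, true_and] at hj ⊢
        rcases eq_or_ne j i with rfl | hne
        · exact hi.2
        · rwa [Function.update_of_ne hne] at hj
    rw [Finset.sum_congr rfl hyterm, Finset.sum_congr rfl hzterm]
    rw [← Finset.sum_mul, ← Finset.mul_sum]
    rw [← Phi_mul_denom μ Ka y hy (by rw [← hDy]; exact ne_of_gt hDyp),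
        ← Phi_mul_denom μ Ka z hz (by rw [← hDz]; exact ne_of_gt hDzp)]
    rw [← hDy, ← hDz]
    field_simp

/-- ENNReal version of the term of the normalization series. -/
noncomputable def Fen {I K : Type} [Fintype I] [DecidableEq I] [DecidableEq K]
    (μ : K → ℝ) (Ka : I → Finset K) (lam : I → ℝ) (x : I → ℕ) : ℝ≥0∞ :=
  ENNReal.ofReal (Phi μ Ka x) * ∏ c, ENNReal.ofReal (lam c) ^ x c

lemma Fen_eq_ofReal (hμ : ∀ k, 0 ≤ μ k) (lam : I → ℝ) (hlam : ∀ c, 0 ≤ lam c) (x : I → ℕ) :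
    Fen μ Ka lam x = ENNReal.ofReal (Phi μ Ka x * ∏ c, lam c ^ x c) := by
  rw [Fen, ENNReal.ofReal_mul (Phi_nonneg μ Ka hμ x)]
  congr 1
  rw [ENNReal.ofReal_prod_of_nonneg (fun c _ => pow_nonneg (hlam c) _)]
  exact Finset.prod_congr rfl fun c _ => (ENNReal.ofReal_pow (hlam c) _).symm

lemma Fen_zero (lam : I → ℝ) : Fen μ Ka lam (fun _ => 0) = 1 := by
  simp [Fen, Phi_zero]

lemma prod_pow_split (el : I → ℝ≥0∞) (y : I → ℕ) (c : I) :
    ∏ j, el j ^ y j = el c ^ y c * ∏ j ∈ Finset.univ.erase c, el j ^ y j :=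
  (Finset.mul_prod_erase Finset.univ _ (Finset.mem_univ c)).symm

lemma tsum_shift (hμ : ∀ k, 0 ≤ μ k) (lam : I → ℝ) (c : I) :
    (∑' x : I → ℕ, if 0 < x c then
        ENNReal.ofReal (Phi μ Ka (Function.update x c (x c - 1))) *
          ∏ j, ENNReal.ofReal (lam j) ^ x j else 0) =
      ENNReal.ofReal (lam c) * ∑' x : I → ℕ, Fen μ Ka lam x := by
  rw [← ENNReal.tsum_mul_left]
  set el : I → ℝ≥0∞ := fun j => ENNReal.ofReal (lam j) with hel
  set g : (I → ℕ) → ℝ≥0∞ := fun y => ENNReal.ofReal (lam c) * Fen μ Ka lam y with hg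
  set f : (I → ℕ) → ℝ≥0∞ := fun x => if 0 < x c then
      ENNReal.ofReal (Phi μ Ka (Function.update x c (x c - 1))) * ∏ j, el j ^ x j else 0
    with hfdef
  have key : ∀ y : I → ℕ, f (Function.update y c (y c + 1)) = g y := by
    intro y
    have hpos : 0 < Function.update y c (y c + 1) c := by simp [Function.update_self]
    rw [hfdef]
    simp only [hpos, if_pos]
    have h1 : Function.update (Function.update y c (y c + 1)) c
        (Function.update y c (y c + 1) c - 1) = y := by
      funext j
      rcases eq_or_ne j c with rfl | hne
      · simp [Function.update_self]
      · simp [Function.update_of_ne hne]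
    have h2 : ∏ j, el j ^ (Function.update y c (y c + 1)) j = el c * ∏ j, el j ^ y j := by
      rw [prod_pow_split el _ c, prod_pow_split el y c]
      have : ∏ j ∈ Finset.univ.erase c, el j ^ (Function.update y c (y c + 1)) j =
          ∏ j ∈ Finset.univ.erase c, el j ^ y j := by
        apply Finset.prod_congr rfl
        intro j hj
        rw [Function.update_of_ne (Finset.mem_erase.mp hj).1]
      rw [this, Function.update_self, pow_succ]
      ring
    rw [h1, h2]
    simp only [hg, Fen, hel]
    ring
  apply tsum_eq_tsum_of_ne_zero_bij
    (i := fun (y : Function.support g) => Function.update y.1 c (y.1 c + 1))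
  · intro y y' h
    have : ∀ j, (Function.update y.1 c (y.1 c + 1)) j = (Function.update y'.1 c (y'.1 c + 1)) j :=
      fun j => congrFun h j
    apply Subtype.ext
    funext j
    rcases eq_or_ne j c with rfl | hne
    · have := this j
      simpa [Function.update_self] using this
    · have := this j
      simpa [Function.update_of_ne hne] using this
  · intro x hx
    have hxc : 0 < x c := by
      by_contra h
      apply hx
      simp [h]
    set y : I → ℕ := Function.update x c (x c - 1) with hy
    have hxy : Function.update y c (y c + 1) = x := by
      funext j
      rcases eq_or_ne j c with rfl | hne
      · simp [Function.update_self, hy]; omega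
      · simp [hy, Function.update_of_ne hne]
    have hgy : g y ≠ 0 := by
      rw [← key y, hxy]
      exact hx
    exact ⟨⟨y, hgy⟩, hxy⟩
  · intro y
    exact key y.1

variable [Fintype K]

lemma balance_tsum (hμ : ∀ k, 0 < μ k) (hKa : ∀ c, (Ka c).Nonempty)
    (lam : I → ℝ) (hlam : ∀ c, 0 ≤ lam c) :
    (∑' x : I → ℕ, Fen μ Ka lam x *
        ∑ k ∈ (Finset.univ.filter fun i => 0 < x i).biUnion Ka, ENNReal.ofReal (μ k)) =
      (∑ c, ENNReal.ofReal (lam c)) * ∑' x : I → ℕ, Fen μ Ka lam x := by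
  have hμ0 : ∀ k, 0 ≤ μ k := fun k => (hμ k).le
  have step1 : ∀ x : I → ℕ, Fen μ Ka lam x *
      (∑ k ∈ (Finset.univ.filter fun i => 0 < x i).biUnion Ka, ENNReal.ofReal (μ k)) =
      ∑ c : I, (if 0 < x c then
        ENNReal.ofReal (Phi μ Ka (Function.update x c (x c - 1))) *
          ∏ j, ENNReal.ofReal (lam j) ^ x j else 0) := by
    intro x
    by_cases hx : x = fun _ => 0
    · subst hx
      simp
    · have hden : (0:ℝ) < ∑ k ∈ (Finset.univ.filter fun i => 0 < x i).biUnion Ka, μ k :=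
        denom_pos μ Ka hμ hKa x hx
      have hm : (∑ k ∈ (Finset.univ.filter fun i => 0 < x i).biUnion Ka, ENNReal.ofReal (μ k)) =
          ENNReal.ofReal (∑ k ∈ (Finset.univ.filter fun i => 0 < x i).biUnion Ka, μ k) :=
        (ENNReal.ofReal_sum_of_nonneg (fun k _ => hμ0 k)).symm
      rw [Fen, mul_right_comm, hm, ← ENNReal.ofReal_mul (Phi_nonneg μ Ka hμ0 x),
        Phi_mul_denom μ Ka x hx (ne_of_gt hden),
        ENNReal.ofReal_sum_of_nonneg (fun i _ => Phi_nonneg μ Ka hμ0 _),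
        Finset.sum_mul, Finset.sum_filter]
  calc (∑' x : I → ℕ, Fen μ Ka lam x *
        ∑ k ∈ (Finset.univ.filter fun i => 0 < x i).biUnion Ka, ENNReal.ofReal (μ k))
      = ∑' x : I → ℕ, ∑ c : I, (if 0 < x c then
          ENNReal.ofReal (Phi μ Ka (Function.update x c (x c - 1))) *
            ∏ j, ENNReal.ofReal (lam j) ^ x j else 0) := by
        exact tsum_congr step1
    _ = ∑ c : I, ∑' x : I → ℕ, (if 0 < x c then
          ENNReal.ofReal (Phi μ Ka (Function.update x c (x c - 1))) *
            ∏ j, ENNReal.ofReal (lam j) ^ x j else 0) :=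
        Summable.tsum_finsetSum (fun _ _ => ENNReal.summable)
    _ = ∑ c : I, ENNReal.ofReal (lam c) * ∑' x : I → ℕ, Fen μ Ka lam x :=
        Finset.sum_congr rfl fun c _ => tsum_shift μ Ka hμ0 lam c
    _ = (∑ c, ENNReal.ofReal (lam c)) * ∑' x : I → ℕ, Fen μ Ka lam x :=
        (Finset.sum_mul _ _ _).symm

lemma balance_identity (hμ : ∀ k, 0 < μ k) (hKa : ∀ c, (Ka c).Nonempty)
    (lam : I → ℝ) (hlam : ∀ c, 0 ≤ lam c) :
    (∑ k, ENNReal.ofReal (μ k)) * (∑' x : I → ℕ, Fen μ Ka lam x) =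
      (∑ c, ENNReal.ofReal (lam c)) * (∑' x : I → ℕ, Fen μ Ka lam x) +
      ∑ k, ENNReal.ofReal (μ k) *
        ∑' x : I → ℕ, (if k ∈ (Finset.univ.filter fun i => 0 < x i).biUnion Ka then 0
          else Fen μ Ka lam x) := by
  have split : ∀ x : I → ℕ, Fen μ Ka lam x * (∑ k, ENNReal.ofReal (μ k)) =
      Fen μ Ka lam x *
        (∑ k ∈ (Finset.univ.filter fun i => 0 < x i).biUnion Ka, ENNReal.ofReal (μ k)) +
      ∑ k : K, ENNReal.ofReal (μ k) *
        (if k ∈ (Finset.univ.filter fun i => 0 < x i).biUnion Ka then 0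
          else Fen μ Ka lam x) := by
    intro x
    set A := (Finset.univ.filter fun i => 0 < x i).biUnion Ka with hA
    have h2 : (∑ k : K, ENNReal.ofReal (μ k) *
        (if k ∈ A then 0 else Fen μ Ka lam x)) =
        ∑ k ∈ Aᶜ, ENNReal.ofReal (μ k) * Fen μ Ka lam x := by
      rw [← Finset.sum_add_sum_compl A]
      have hA0 : (∑ k ∈ A, ENNReal.ofReal (μ k) * (if k ∈ A then 0 else Fen μ Ka lam x)) = 0 := by
        apply Finset.sum_eq_zero
        intro k hk
        rw [if_pos hk, mul_zero]
      rw [hA0, zero_add]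
      apply Finset.sum_congr rfl
      intro k hk
      rw [if_neg (Finset.mem_compl.mp hk)]
    rw [h2, ← Finset.sum_add_sum_compl A (fun k => ENNReal.ofReal (μ k)), mul_add]
    congr 1
    rw [Finset.mul_sum]
    exact Finset.sum_congr rfl fun k _ => mul_comm _ _
  calc (∑ k, ENNReal.ofReal (μ k)) * (∑' x : I → ℕ, Fen μ Ka lam x)
      = ∑' x : I → ℕ, Fen μ Ka lam x * (∑ k, ENNReal.ofReal (μ k)) := by
        rw [ENNReal.tsum_mul_right, mul_comm]
    _ = ∑' x : I → ℕ, (Fen μ Ka lam x *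
          (∑ k ∈ (Finset.univ.filter fun i => 0 < x i).biUnion Ka, ENNReal.ofReal (μ k)) +
        ∑ k : K, ENNReal.ofReal (μ k) *
          (if k ∈ (Finset.univ.filter fun i => 0 < x i).biUnion Ka then 0
            else Fen μ Ka lam x)) := tsum_congr split
    _ = (∑' x : I → ℕ, Fen μ Ka lam x *
          (∑ k ∈ (Finset.univ.filter fun i => 0 < x i).biUnion Ka, ENNReal.ofReal (μ k))) +
        ∑' x : I → ℕ, ∑ k : K, ENNReal.ofReal (μ k) *
          (if k ∈ (Finset.univ.filter fun i => 0 < x i).biUnion Ka then 0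
            else Fen μ Ka lam x) := ENNReal.tsum_add
    _ = (∑ c, ENNReal.ofReal (lam c)) * (∑' x : I → ℕ, Fen μ Ka lam x) +
        ∑ k, ENNReal.ofReal (μ k) *
          ∑' x : I → ℕ, (if k ∈ (Finset.univ.filter fun i => 0 < x i).biUnion Ka then 0
            else Fen μ Ka lam x) := by
        rw [balance_tsum μ Ka hμ hKa lam hlam]
        congr 1
        rw [Summable.tsum_finsetSum (fun _ _ => ENNReal.summable)]
        exact Finset.sum_congr rfl fun k _ => ENNReal.tsum_mul_left


section Line

variable {Kn : ℕ} (μl : Fin Kn → ℝ) (lam : LineCls Kn → ℝ)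

lemma lineKa_nonempty (c : LineCls Kn) : (lineKa c).Nonempty :=
  Finset.nonempty_Icc.mpr c.2

lemma lamL_eq (k : Fin Kn) (c : LineCls Kn) (h : c.1.2 < k) :
    lineLamRange lam 0 ((k : ℕ) - 1) c = lam c := by
  rw [lineLamRange, if_pos]
  have := Fin.lt_def.mp h
  constructor <;> omega

lemma lamL_zero (k : Fin Kn) (c : LineCls Kn) (h : ¬ c.1.2 < k) :
    lineLamRange lam 0 ((k : ℕ) - 1) c = 0 := by
  rw [lineLamRange, if_neg]
  rw [Fin.lt_def] at h
  omega

lemma lamR_eq (k : Fin Kn) (c : LineCls Kn) (h : k < c.1.1) :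
    lineLamRange lam ((k : ℕ) + 1) ((Kn : ℤ) - 1) c = lam c := by
  rw [lineLamRange, if_pos]
  have := Fin.lt_def.mp h
  have h2 := c.1.2.isLt
  constructor <;> omega

lemma lamR_zero (k : Fin Kn) (c : LineCls Kn) (h : ¬ k < c.1.1) :
    lineLamRange lam ((k : ℕ) + 1) ((Kn : ℤ) - 1) c = 0 := by
  rw [lineLamRange, if_neg]
  rw [Fin.lt_def] at h
  omega

lemma lineLamRange_nonneg (hlam : ∀ c, 0 ≤ lam c) (a b : ℤ) (c : LineCls Kn) :
    0 ≤ lineLamRange lam a b c := by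
  rw [lineLamRange]
  split
  · exact hlam c
  · exact le_refl _

lemma line_Fen_split (hμ : ∀ k, 0 < μl k) (k : Fin Kn) (y z : LineCls Kn → ℕ)
    (hy : ∀ c, 0 < y c → c.1.2 < k) (hz : ∀ c, 0 < z c → k < c.1.1) :
    Fen μl lineKa lam (fun c => y c + z c) =
      Fen μl lineKa (lineLamRange lam 0 ((k : ℕ) - 1)) y *
        Fen μl lineKa (lineLamRange lam ((k : ℕ) + 1) ((Kn : ℤ) - 1)) z := by
  have hdisj : Disjoint ((Finset.univ.filter fun c => 0 < y c).biUnion lineKa)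
      ((Finset.univ.filter fun c => 0 < z c).biUnion lineKa) := by
    rw [Finset.disjoint_left]
    intro s hs hs'
    obtain ⟨c, hc, hsc⟩ := Finset.mem_biUnion.mp hs
    obtain ⟨c', hc', hsc'⟩ := Finset.mem_biUnion.mp hs'
    simp only [Finset.mem_filter, Finset.mem_univ, true_and] at hc hc'
    rw [lineKa, Finset.mem_Icc] at hsc hsc'
    exact absurd ((hsc.2.trans_lt (hy c hc)).trans (hz c' hc')) (not_lt.mpr hsc'.1)
  have hPhi := Phi_add_of_disjoint μl lineKa hμ lineKa_nonempty y z hdisj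
  rw [Fen, Fen, Fen, hPhi, ENNReal.ofReal_mul (Phi_nonneg μl lineKa (fun k => (hμ k).le) y)]
  have hprod : ∏ c, ENNReal.ofReal (lam c) ^ (y c + z c) =
      (∏ c, ENNReal.ofReal (lineLamRange lam 0 ((k : ℕ) - 1) c) ^ y c) *
        ∏ c, ENNReal.ofReal (lineLamRange lam ((k : ℕ) + 1) ((Kn : ℤ) - 1) c) ^ z c := by
    rw [← Finset.prod_mul_distrib]
    apply Finset.prod_congr rfl
    intro c _
    rw [pow_add]
    congr 1
    · rcases Nat.eq_zero_or_pos (y c) with h | h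
      · simp [h]
      · rw [lamL_eq lam k c (hy c h)]
    · rcases Nat.eq_zero_or_pos (z c) with h | h
      · simp [h]
      · rw [lamR_eq lam k c (hz c h)]
  rw [hprod]
  ring

lemma line_FL_support (hμ : ∀ k, 0 < μl k) (k : Fin Kn) (y : LineCls Kn → ℕ)
    (hy : Fen μl lineKa (lineLamRange lam 0 ((k : ℕ) - 1)) y ≠ 0)
    (c : LineCls Kn) (hc : 0 < y c) : c.1.2 < k := by
  by_contra h
  apply hy
  rw [Fen]
  apply mul_eq_zero_of_right
  apply Finset.prod_eq_zero (Finset.mem_univ c)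
  rw [lamL_zero lam k c h, ENNReal.ofReal_zero, zero_pow (by omega)]

lemma line_FR_support (hμ : ∀ k, 0 < μl k) (k : Fin Kn) (z : LineCls Kn → ℕ)
    (hz : Fen μl lineKa (lineLamRange lam ((k : ℕ) + 1) ((Kn : ℤ) - 1)) z ≠ 0)
    (c : LineCls Kn) (hc : 0 < z c) : k < c.1.1 := by
  by_contra h
  apply hz
  rw [Fen]
  apply mul_eq_zero_of_right
  apply Finset.prod_eq_zero (Finset.mem_univ c)
  rw [lamR_zero lam k c h, ENNReal.ofReal_zero, zero_pow (by omega)]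

lemma line_T_factor (hμ : ∀ k, 0 < μl k) (hlam : ∀ c, 0 ≤ lam c) (k : Fin Kn) :
    (∑' x : LineCls Kn → ℕ,
        if k ∈ (Finset.univ.filter fun c => 0 < x c).biUnion lineKa then 0
        else Fen μl lineKa lam x) =
      (∑' y : LineCls Kn → ℕ, Fen μl lineKa (lineLamRange lam 0 ((k : ℕ) - 1)) y) *
        ∑' z : LineCls Kn → ℕ,
          Fen μl lineKa (lineLamRange lam ((k : ℕ) + 1) ((Kn : ℤ) - 1)) z := by
  set FL : (LineCls Kn → ℕ) → ℝ≥0∞ :=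
    fun y => Fen μl lineKa (lineLamRange lam 0 ((k : ℕ) - 1)) y with hFL
  set FR : (LineCls Kn → ℕ) → ℝ≥0∞ :=
    fun z => Fen μl lineKa (lineLamRange lam ((k : ℕ) + 1) ((Kn : ℤ) - 1)) z with hFR
  have hstep : (∑' y, FL y) * (∑' z, FR z) =
      ∑' p : (LineCls Kn → ℕ) × (LineCls Kn → ℕ), FL p.1 * FR p.2 := by
    rw [ENNReal.tsum_prod (f := fun y z => FL y * FR z)]
    calc (∑' y, FL y) * (∑' z, FR z) = ∑' y, FL y * ∑' z, FR z := by
          rw [ENNReal.tsum_mul_right]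
      _ = ∑' y, ∑' z, FL y * FR z := by
          exact tsum_congr fun y => (ENNReal.tsum_mul_left).symm
  rw [hstep]
  set g : (LineCls Kn → ℕ) × (LineCls Kn → ℕ) → ℝ≥0∞ := fun p => FL p.1 * FR p.2 with hgdef
  have hsupp : ∀ p : Function.support g,
      (∀ c, 0 < p.1.1 c → c.1.2 < k) ∧ (∀ c, 0 < p.1.2 c → k < c.1.1) := by
    intro p
    have h : FL p.1.1 * FR p.1.2 ≠ 0 := p.2
    obtain ⟨h1, h2⟩ := mul_ne_zero_iff.mp h
    exact ⟨line_FL_support μl lam hμ k _ h1, line_FR_support μl lam hμ k _ h2⟩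
  have hknot : ∀ y z : LineCls Kn → ℕ, (∀ c, 0 < y c → c.1.2 < k) →
      (∀ c, 0 < z c → k < c.1.1) →
      k ∉ (Finset.univ.filter fun c => 0 < (fun c => y c + z c) c).biUnion lineKa := by
    intro y z hy hz hk
    obtain ⟨c, hc, hkc⟩ := Finset.mem_biUnion.mp hk
    simp only [Finset.mem_filter, Finset.mem_univ, true_and] at hc
    rw [lineKa, Finset.mem_Icc] at hkc
    rcases Nat.lt_or_ge 0 (y c) with h | h
    · exact absurd (hy c h) (not_lt.mpr hkc.2)
    · have hzc : 0 < z c := by omega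
      exact absurd (hz c hzc) (not_lt.mpr hkc.1)
  apply tsum_eq_tsum_of_ne_zero_bij
    (i := fun (p : Function.support g) => fun c => p.1.1 c + p.1.2 c)
  · -- injectivity
    intro p q h
    have hp := hsupp p
    have hq := hsupp q
    have hpq : ∀ c, p.1.1 c + p.1.2 c = q.1.1 c + q.1.2 c := fun c => congrFun h c
    apply Subtype.ext
    have h1 : p.1.1 = q.1.1 := by
      funext c
      by_cases hc : c.1.2 < k
      · have hz1 : p.1.2 c = 0 := by
          by_contra h0
          have := hp.2 c (Nat.pos_of_ne_zero h0)
          exact absurd ((this.trans_le c.2).trans hc) (lt_irrefl k)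
        have hz2 : q.1.2 c = 0 := by
          by_contra h0
          have := hq.2 c (Nat.pos_of_ne_zero h0)
          exact absurd ((this.trans_le c.2).trans hc) (lt_irrefl k)
        have := hpq c
        omega
      · have hy1 : p.1.1 c = 0 := by
          by_contra h0
          exact hc (hp.1 c (Nat.pos_of_ne_zero h0))
        have hy2 : q.1.1 c = 0 := by
          by_contra h0
          exact hc (hq.1 c (Nat.pos_of_ne_zero h0))
        rw [hy1, hy2]
    have h2 : p.1.2 = q.1.2 := by
      funext c
      have := hpq c
      have := congrFun h1 c
      omega
    exact Prod.ext h1 h2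
  · -- support f ⊆ range
    intro x hx
    rw [Function.mem_support] at hx
    have hknotmem : k ∉ (Finset.univ.filter fun c => 0 < x c).biUnion lineKa := by
      intro hmem
      exact hx (if_pos hmem)
    have hFenx : Fen μl lineKa lam x ≠ 0 := fun h0 => hx (by rw [if_neg hknotmem]; exact h0)
    set y : LineCls Kn → ℕ := fun c => if c.1.2 < k then x c else 0 with hy
    set z : LineCls Kn → ℕ := fun c => if c.1.2 < k then 0 else x c with hz
    have hyx : ∀ c, 0 < y c → c.1.2 < k := by
      intro c hc
      by_contra h
      rw [hy] at hc
      simp [h] at hc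
    have hzx : ∀ c, 0 < z c → k < c.1.1 := by
      intro c hc
      rw [hz] at hc
      by_cases h : c.1.2 < k
      · simp [h] at hc
      · simp [h] at hc
        have hxc : 0 < x c := hc
        have : k ∉ lineKa c := by
          intro hkc
          exact hknotmem (Finset.mem_biUnion.mpr
            ⟨c, Finset.mem_filter.mpr ⟨Finset.mem_univ c, hxc⟩, hkc⟩)
        rw [lineKa, Finset.mem_Icc] at this
        push_neg at this
        by_contra hcon
        exact h (this (not_lt.mp hcon))
    have hsum : (fun c => y c + z c) = x := by
      funext c
      rw [hy, hz]
      by_cases h : c.1.2 < k <;> simp [h]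
    have hgyz : g (y, z) ≠ 0 := by
      rw [hgdef]
      have := line_Fen_split μl lam hμ k y z hyx hzx
      rw [hFL, hFR]
      simp only
      rw [← this, hsum]
      exact hFenx
    exact ⟨⟨(y, z), hgyz⟩, hsum⟩
  · -- values agree
    intro p
    have hp := hsupp p
    rw [if_neg (hknot _ _ hp.1 hp.2)]
    exact line_Fen_split μl lam hμ k _ _ hp.1 hp.2


end Line

end Aux

/-- **Proposition 3, empty probability of a line pool.** If `G(λ) < ∞`
then `ψ = (M(K) − Λ(I)) / (∑_{k=1}^K μ_k / (ψ_{|1..k−1} ψ_{|k+1..K}))`. -/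
theorem line_pool_empty_probability
    (K : ℕ) (hK : 1 ≤ K)
    (μ : Fin K → ℝ) (hμ : ∀ k, 0 < μ k)
    (lam : LineCls K → ℝ) (hlam : ∀ c, 0 ≤ lam c)
    (hG : Summable (fun x : LineCls K → ℕ =>
      Phi μ lineKa x * ∏ c, lam c ^ x c)) :
    (Gf μ lineKa lam)⁻¹ =
      ((∑ k, μ k) - ∑ c, lam c) /
        ∑ k : Fin K, μ k /
          (linePsiRange μ lam 0 ((k : ℕ) - 1) *
            linePsiRange μ lam ((k : ℕ) + 1) ((K : ℤ) - 1)) := by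
  have hμ0 : ∀ k, 0 ≤ μ k := fun k => (hμ k).le
  have hf_nonneg : ∀ x : LineCls K → ℕ, 0 ≤ Phi μ lineKa x * ∏ c, lam c ^ x c :=
    fun x => mul_nonneg (Phi_nonneg μ lineKa hμ0 x)
      (Finset.prod_nonneg fun c _ => pow_nonneg (hlam c) _)
  -- abbreviations (explicit, no set, to keep syntactic forms stable)
  have hlamL : ∀ (k : Fin K) c, 0 ≤ lineLamRange lam 0 ((k : ℕ) - 1) c :=
    fun k c => lineLamRange_nonneg lam hlam _ _ c
  have hlamR : ∀ (k : Fin K) c, 0 ≤ lineLamRange lam ((k : ℕ) + 1) ((K : ℤ) - 1) c :=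
    fun k c => lineLamRange_nonneg lam hlam _ _ c
  have hlam_le : ∀ (a b : ℤ) c, lineLamRange lam a b c ≤ lam c := by
    intro a b c
    rw [lineLamRange]
    split
    · exact le_refl _
    · exact hlam c
  -- summability of restricted series
  have hsumRes : ∀ lam' : LineCls K → ℝ, (∀ c, 0 ≤ lam' c) → (∀ c, lam' c ≤ lam c) →
      Summable (fun x : LineCls K → ℕ => Phi μ lineKa x * ∏ c, lam' c ^ x c) := by
    intro lam' h0 hle
    apply Summable.of_nonneg_of_le _ _ hG
    · exact fun x => mul_nonneg (Phi_nonneg μ lineKa hμ0 x)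
        (Finset.prod_nonneg fun c _ => pow_nonneg (h0 c) _)
    · intro x
      apply mul_le_mul_of_nonneg_left _ (Phi_nonneg μ lineKa hμ0 x)
      apply Finset.prod_le_prod (fun c _ => pow_nonneg (h0 c) _)
      exact fun c _ => pow_le_pow_left₀ (h0 c) (hle c) _
  have hGLsum : ∀ k : Fin K, Summable (fun x : LineCls K → ℕ =>
      Phi μ lineKa x * ∏ c, lineLamRange lam 0 ((k : ℕ) - 1) c ^ x c) :=
    fun k => hsumRes _ (hlamL k) (fun c => hlam_le _ _ c)
  have hGRsum : ∀ k : Fin K, Summable (fun x : LineCls K → ℕ =>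
      Phi μ lineKa x * ∏ c, lineLamRange lam ((k : ℕ) + 1) ((K : ℤ) - 1) c ^ x c) :=
    fun k => hsumRes _ (hlamR k) (fun c => hlam_le _ _ c)
  -- ofReal identities
  have hofR : ∀ lam' : LineCls K → ℝ, (∀ c, 0 ≤ lam' c) →
      Summable (fun x : LineCls K → ℕ => Phi μ lineKa x * ∏ c, lam' c ^ x c) →
      (∑' x : LineCls K → ℕ, Fen μ lineKa lam' x) = ENNReal.ofReal (Gf μ lineKa lam') := by
    intro lam' h0 hsum
    rw [Gf, ENNReal.ofReal_tsum_of_nonneg (fun x => mul_nonneg (Phi_nonneg μ lineKa hμ0 x)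
      (Finset.prod_nonneg fun c _ => pow_nonneg (h0 c) _)) hsum]
    exact tsum_congr fun x => Fen_eq_ofReal μ lineKa hμ0 lam' h0 x
  have hofG := hofR lam hlam hG
  have hofGL : ∀ k : Fin K, (∑' y : LineCls K → ℕ,
      Fen μ lineKa (lineLamRange lam 0 ((k : ℕ) - 1)) y) =
      ENNReal.ofReal (Gf μ lineKa (lineLamRange lam 0 ((k : ℕ) - 1))) :=
    fun k => hofR _ (hlamL k) (hGLsum k)
  have hofGR : ∀ k : Fin K, (∑' z : LineCls K → ℕ,
      Fen μ lineKa (lineLamRange lam ((k : ℕ) + 1) ((K : ℤ) - 1)) z) =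
      ENNReal.ofReal (Gf μ lineKa (lineLamRange lam ((k : ℕ) + 1) ((K : ℤ) - 1))) :=
    fun k => hofR _ (hlamR k) (hGRsum k)
  -- one ≤ each normalization constant
  have hone : ∀ lam' : LineCls K → ℝ, (∀ c, 0 ≤ lam' c) →
      Summable (fun x : LineCls K → ℕ => Phi μ lineKa x * ∏ c, lam' c ^ x c) →
      1 ≤ Gf μ lineKa lam' := by
    intro lam' h0 hsum
    have h1 : Phi μ lineKa (fun _ => 0) * (∏ c : LineCls K, lam' c ^ (0:ℕ)) = 1 := by
      rw [Phi_zero]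
      simp
    calc (1:ℝ) = Phi μ lineKa (fun _ => 0) * ∏ c, lam' c ^ ((fun _ => 0) c) := by
          rw [← h1]
      _ ≤ Gf μ lineKa lam' := by
          apply Summable.le_tsum hsum
          intro x _
          exact mul_nonneg (Phi_nonneg μ lineKa hμ0 x)
            (Finset.prod_nonneg fun c _ => pow_nonneg (h0 c) _)
  have hGpos : 0 < Gf μ lineKa lam := lt_of_lt_of_le one_pos (hone lam hlam hG)
  have hGLpos : ∀ k : Fin K, 0 < Gf μ lineKa (lineLamRange lam 0 ((k : ℕ) - 1)) :=
    fun k => lt_of_lt_of_le one_pos (hone _ (hlamL k) (hGLsum k))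
  have hGRpos : ∀ k : Fin K,
      0 < Gf μ lineKa (lineLamRange lam ((k : ℕ) + 1) ((K : ℤ) - 1)) :=
    fun k => lt_of_lt_of_le one_pos (hone _ (hlamR k) (hGRsum k))
  -- main ENNReal identity
  have hT : ∀ k : Fin K, (∑' x : LineCls K → ℕ,
      if k ∈ (Finset.univ.filter fun i => 0 < x i).biUnion lineKa then 0
        else Fen μ lineKa lam x) =
      ENNReal.ofReal (Gf μ lineKa (lineLamRange lam 0 ((k : ℕ) - 1))) *
        ENNReal.ofReal (Gf μ lineKa (lineLamRange lam ((k : ℕ) + 1) ((K : ℤ) - 1))) := by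
    intro k
    rw [line_T_factor μ lam hμ hlam k, hofGL k, hofGR k]
  have hmain := balance_identity μ lineKa hμ lineKa_nonempty lam hlam
  have hsum_eq : (∑ k : Fin K, ENNReal.ofReal (μ k) * ∑' x : LineCls K → ℕ,
      (if k ∈ (Finset.univ.filter fun i => 0 < x i).biUnion lineKa then 0
        else Fen μ lineKa lam x)) =
      ∑ k : Fin K, ENNReal.ofReal (μ k) *
        (ENNReal.ofReal (Gf μ lineKa (lineLamRange lam 0 ((k : ℕ) - 1))) *
          ENNReal.ofReal (Gf μ lineKa (lineLamRange lam ((k : ℕ) + 1) ((K : ℤ) - 1)))) :=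
    Finset.sum_congr rfl fun k _ => by rw [hT k]
  rw [hofG, hsum_eq] at hmain
  -- convert to a real identity
  have hreal : (∑ k, μ k) * Gf μ lineKa lam =
      (∑ c, lam c) * Gf μ lineKa lam +
        ∑ k : Fin K, μ k * (Gf μ lineKa (lineLamRange lam 0 ((k : ℕ) - 1)) *
          Gf μ lineKa (lineLamRange lam ((k : ℕ) + 1) ((K : ℤ) - 1))) := by
    have hl : (∑ k, ENNReal.ofReal (μ k)) * ENNReal.ofReal (Gf μ lineKa lam) =
        ENNReal.ofReal ((∑ k, μ k) * Gf μ lineKa lam) := by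
      rw [ENNReal.ofReal_mul (Finset.sum_nonneg fun k _ => hμ0 k),
        ENNReal.ofReal_sum_of_nonneg (fun k _ => hμ0 k)]
    have hr : (∑ c, ENNReal.ofReal (lam c)) * ENNReal.ofReal (Gf μ lineKa lam) +
        (∑ k : Fin K, ENNReal.ofReal (μ k) *
          (ENNReal.ofReal (Gf μ lineKa (lineLamRange lam 0 ((k : ℕ) - 1))) *
            ENNReal.ofReal (Gf μ lineKa (lineLamRange lam ((k : ℕ) + 1) ((K : ℤ) - 1))))) =
        ENNReal.ofReal ((∑ c, lam c) * Gf μ lineKa lam +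
          ∑ k : Fin K, μ k * (Gf μ lineKa (lineLamRange lam 0 ((k : ℕ) - 1)) *
            Gf μ lineKa (lineLamRange lam ((k : ℕ) + 1) ((K : ℤ) - 1)))) := by
      rw [ENNReal.ofReal_add (mul_nonneg (Finset.sum_nonneg fun c _ => hlam c) hGpos.le)
        (Finset.sum_nonneg fun k _ => mul_nonneg (hμ0 k)
          (mul_nonneg (hGLpos k).le (hGRpos k).le))]
      congr 1
      · rw [ENNReal.ofReal_mul (Finset.sum_nonneg fun c _ => hlam c),
          ENNReal.ofReal_sum_of_nonneg (fun c _ => hlam c)]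
      · rw [ENNReal.ofReal_sum_of_nonneg (fun k _ => mul_nonneg (hμ0 k)
          (mul_nonneg (hGLpos k).le (hGRpos k).le))]
        apply Finset.sum_congr rfl
        intro k _
        rw [ENNReal.ofReal_mul (hμ0 k), ENNReal.ofReal_mul (hGLpos k).le]
    rw [hl, hr] at hmain
    exact (ENNReal.ofReal_eq_ofReal_iff
      (mul_nonneg (Finset.sum_nonneg fun k _ => hμ0 k) hGpos.le)
      (add_nonneg (mul_nonneg (Finset.sum_nonneg fun c _ => hlam c) hGpos.le)
        (Finset.sum_nonneg fun k _ => mul_nonneg (hμ0 k)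
          (mul_nonneg (hGLpos k).le (hGRpos k).le)))).mp hmain
  -- final algebra
  have hterm : ∀ k : Fin K, μ k / (linePsiRange μ lam 0 ((k : ℕ) - 1) *
      linePsiRange μ lam ((k : ℕ) + 1) ((K : ℤ) - 1)) =
      μ k * (Gf μ lineKa (lineLamRange lam 0 ((k : ℕ) - 1)) *
        Gf μ lineKa (lineLamRange lam ((k : ℕ) + 1) ((K : ℤ) - 1))) := by
    intro k
    rw [linePsiRange, linePsiRange, ← mul_inv, div_inv_eq_mul]
  rw [Finset.sum_congr rfl fun k _ => hterm k]
  have hDval : (∑ k : Fin K, μ k * (Gf μ lineKa (lineLamRange lam 0 ((k : ℕ) - 1)) *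
      Gf μ lineKa (lineLamRange lam ((k : ℕ) + 1) ((K : ℤ) - 1)))) =
      ((∑ k, μ k) - ∑ c, lam c) * Gf μ lineKa lam := by
    linear_combination -hreal
  have hDpos : 0 < ∑ k : Fin K, μ k * (Gf μ lineKa (lineLamRange lam 0 ((k : ℕ) - 1)) *
      Gf μ lineKa (lineLamRange lam ((k : ℕ) + 1) ((K : ℤ) - 1))) := by
    have : Nonempty (Fin K) := ⟨⟨0, hK⟩⟩
    apply Finset.sum_pos
    · intro k _
      exact mul_pos (hμ k) (mul_pos (hGLpos k) (hGRpos k))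
    · exact Finset.univ_nonempty
  have hMLam : 0 < (∑ k, μ k) - ∑ c, lam c := by
    by_contra h
    push_neg at h
    nlinarith [hDval, hDpos, hGpos]
  rw [hDval, div_mul_cancel_left₀ (ne_of_gt hMLam)]
end

section
/- In a ring pool, suppose G(λ) < ∞. Then the probability that the system is empty satisfies ψ = ( M(K) − Λ(I) ) / ( ∑_{k ∈ ℤ/Kℤ} μ_k / ψ_{|k+1..k−1} ), where for each server k, ψ_{|k+1..k−1} is the empty probability of the restricted system obtained by removing server k, i.e. keeping the servers other than k and only the classes whose arc does not contain k. -/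
open scoped BigOperators

/-- Classes of a ring pool with `K` servers indexed by `ℤ/Kℤ`: a starting server `i` and
an arc length `ℓ ∈ {1, …, K−1}` (encoded as `j : Fin (K-1)` with `ℓ = j + 1`). -/
abbrev RingCls (K : ℕ) : Type := ZMod K × Fin (K - 1)

/-- The arc of servers `{i, i+1, …, i+ℓ−1}` (mod `K`) assigned to the class `(i, ℓ)`. -/
def ringKa {K : ℕ} [NeZero K] (c : RingCls K) : Finset (ZMod K) :=
  (Finset.range ((c.2 : ℕ) + 1)).image (fun t : ℕ => c.1 + (t : ZMod K))

/-- Arrival rates of the ring system with server `k` removed: the classes whose arc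
contains `k` get arrival rate `0`. -/
noncomputable def ringLamMinus {K : ℕ} [NeZero K] (lam : RingCls K → ℝ) (k : ZMod K)
    (c : RingCls K) : ℝ :=
  if k ∈ ringKa c then 0 else lam c

namespace BFAux
set_option linter.unusedSectionVars false

open Finset Function

variable {I K : Type} [Fintype I] [DecidableEq I] [DecidableEq K]

noncomputable def DD (μ : K → ℝ) (Ka : I → Finset K) (x : I → ℕ) : ℝ :=
  ∑ k ∈ (Finset.univ.filter (fun i => 0 < x i)).biUnion Ka, μ k

noncomputable def NN (μ : K → ℝ) (Ka : I → Finset K) (x : I → ℕ) : ℝ :=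
  ∑ i ∈ (Finset.univ.filter (fun i => 0 < x i)).attach,
      Phi μ Ka (Function.update x i.1 (x i.1 - 1))

lemma Phi_zero (μ : K → ℝ) (Ka : I → Finset K) : Phi μ Ka (fun _ => 0) = 1 := by
  rw [Phi]; simp

lemma Phi_ne (μ : K → ℝ) (Ka : I → Finset K) {x : I → ℕ} (hx : x ≠ fun _ => 0) :
    Phi μ Ka x = NN μ Ka x / DD μ Ka x := by
  rw [Phi, if_neg hx]; rfl

lemma sum_update_lt {x : I → ℕ} {i : I} (hi : 0 < x i) :
    ∑ j, Function.update x i (x i - 1) j < ∑ j, x j := by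
  apply Finset.sum_lt_sum
  · intro j _
    rcases eq_or_ne j i with rfl | h
    · simp
    · rw [Function.update_of_ne h]
  · exact ⟨i, Finset.mem_univ i, by simp [Function.update_self]; omega⟩

lemma Phi_nonneg_aux (μ : K → ℝ) (Ka : I → Finset K) (hμ : ∀ k, 0 ≤ μ k) (n : ℕ) :
    ∀ x : I → ℕ, ∑ i, x i ≤ n → 0 ≤ Phi μ Ka x := by
  induction n with
  | zero =>
    intro x hx
    have : x = fun _ => 0 := by
      funext i
      have := Finset.single_le_sum (f := x) (fun j _ => Nat.zero_le _) (Finset.mem_univ i)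
      omega
    rw [this, Phi_zero]; norm_num
  | succ n ih =>
    intro x hx
    by_cases h : x = fun _ => 0
    · rw [h, Phi_zero]; norm_num
    · rw [Phi_ne _ _ h]
      apply div_nonneg
      · apply Finset.sum_nonneg
        intro i _
        have hi := i.2
        simp only [Finset.mem_filter] at hi
        exact ih _ (by have := sum_update_lt (x := x) hi.2; omega)
      · exact Finset.sum_nonneg fun k _ => hμ k

lemma Phi_nonneg (μ : K → ℝ) (Ka : I → Finset K) (hμ : ∀ k, 0 ≤ μ k) (x : I → ℕ) :
    0 ≤ Phi μ Ka x :=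
  Phi_nonneg_aux μ Ka hμ _ x le_rfl

lemma DD_pos (μ : K → ℝ) (Ka : I → Finset K) (hμ : ∀ k, 0 < μ k)
    (hKa : ∀ c, (Ka c).Nonempty) {x : I → ℕ} (hx : x ≠ fun _ => 0) :
    0 < DD μ Ka x := by
  apply Finset.sum_pos (fun k _ => hμ k)
  obtain ⟨i, hi⟩ : ∃ i, 0 < x i := by
    by_contra hc
    push_neg at hc
    exact hx (funext fun i => by have := hc i; omega)
  obtain ⟨k, hk⟩ := hKa i
  exact ⟨k, Finset.mem_biUnion.2 ⟨i, Finset.mem_filter.2 ⟨Finset.mem_univ i, hi⟩, hk⟩⟩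

lemma Phi_mul_DD (μ : K → ℝ) (Ka : I → Finset K) (hμ : ∀ k, 0 < μ k)
    (hKa : ∀ c, (Ka c).Nonempty) {x : I → ℕ} (hx : x ≠ fun _ => 0) :
    Phi μ Ka x * DD μ Ka x = NN μ Ka x := by
  rw [Phi_ne _ _ hx, div_mul_cancel₀]
  exact (DD_pos μ Ka hμ hKa hx).ne'

end BFAux
namespace BFAux
set_option linter.unusedSectionVars false

variable {I K : Type} [Fintype I] [DecidableEq I] [DecidableEq K]

/-- Shift: add one job of class `c`. -/
def sft (c : I) (y : I → ℕ) : I → ℕ := Function.update y c (y c + 1)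

lemma sft_injective (c : I) : Function.Injective (sft (I := I) c) := by
  intro y z h
  funext i
  rcases eq_or_ne i c with rfl | hi
  · have := congrFun h i
    simpa [sft] using this
  · have := congrFun h i
    simpa [sft, Function.update_of_ne hi] using this

lemma sft_apply_self (c : I) (y : I → ℕ) : sft c y c = y c + 1 := by
  simp [sft]

lemma unsft_sft (c : I) (y : I → ℕ) :
    Function.update (sft c y) c (sft c y c - 1) = y := by
  simp [sft, Function.update_idem]

lemma sft_unsft {c : I} {x : I → ℕ} (hx : 0 < x c) :
    sft c (Function.update x c (x c - 1)) = x := by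
  unfold sft
  rw [Function.update_self, Function.update_idem]
  have : x c - 1 + 1 = x c := by omega
  rw [this, Function.update_eq_self]

lemma mem_range_sft {c : I} {x : I → ℕ} (hx : 0 < x c) : x ∈ Set.range (sft c) :=
  ⟨Function.update x c (x c - 1), sft_unsft hx⟩

lemma sum_sft (c : I) (y : I → ℕ) : ∑ i, sft c y i = (∑ i, y i) + 1 := by
  unfold sft
  rw [Finset.sum_update_of_mem (Finset.mem_univ c)]
  rw [← Finset.sum_erase_add _ _ (Finset.mem_univ c), Finset.sdiff_singleton_eq_erase]
  ring

lemma prod_pow_sft (lam : I → ℝ) (c : I) (y : I → ℕ) :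
    ∏ i, lam i ^ sft c y i = lam c * ∏ i, lam i ^ y i := by
  unfold sft
  rw [show (fun i => lam i ^ Function.update y c (y c + 1) i) = 
      Function.update (fun i => lam i ^ y i) c (lam c ^ (y c + 1)) from ?_]
  · rw [Finset.prod_update_of_mem (Finset.mem_univ c),
      ← Finset.prod_erase_mul _ _ (Finset.mem_univ c), Finset.sdiff_singleton_eq_erase,
      pow_succ]
    ring
  · funext i
    rcases eq_or_ne i c with rfl | hi
    · simp
    · simp [Function.update_of_ne hi]

end BFAux
namespace BFAux
set_option linter.unusedSectionVars false

variable {I K : Type} [Fintype I] [DecidableEq I] [DecidableEq K]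

/-- One summand of the recursion, as a function of the full state. -/
noncomputable def hcls (μ : K → ℝ) (Ka : I → Finset K) (lam : I → ℝ) (c : I) (x : I → ℕ) : ℝ :=
  if 0 < x c then Phi μ Ka (Function.update x c (x c - 1)) * ∏ i, lam i ^ x i else 0

lemma hcls_sft (μ : K → ℝ) (Ka : I → Finset K) (lam : I → ℝ) (c : I) (y : I → ℕ) :
    hcls μ Ka lam c (sft c y) = lam c * (Phi μ Ka y * ∏ i, lam i ^ y i) := by
  unfold hcls
  rw [if_pos (by rw [sft_apply_self]; omega), unsft_sft, prod_pow_sft]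
  ring

lemma hcls_eq_zero (μ : K → ℝ) (Ka : I → Finset K) (lam : I → ℝ) (c : I) {x : I → ℕ}
    (hx : x ∉ Set.range (sft c)) : hcls μ Ka lam c x = 0 := by
  unfold hcls
  rw [if_neg]
  intro hc
  exact hx (mem_range_sft hc)

lemma NN_mul (μ : K → ℝ) (Ka : I → Finset K) (lam : I → ℝ) (x : I → ℕ) :
    NN μ Ka x * ∏ i, lam i ^ x i = ∑ c, hcls μ Ka lam c x := by
  unfold NN hcls
  rw [Finset.sum_mul, Finset.sum_attach (Finset.univ.filter (fun i => 0 < x i))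
    (fun i => Phi μ Ka (Function.update x i (x i - 1)) * ∏ j, lam j ^ x j)]
  rw [Finset.sum_filter]

lemma summable_hcls (μ : K → ℝ) (Ka : I → Finset K) (lam : I → ℝ) (c : I)
    (hG : Summable (fun x : I → ℕ => Phi μ Ka x * ∏ i, lam i ^ x i)) :
    Summable (hcls μ Ka lam c) := by
  rw [← Function.Injective.summable_iff (sft_injective c)
    (fun x hx => hcls_eq_zero μ Ka lam c hx)]
  have : (hcls μ Ka lam c ∘ sft c) = fun y => lam c * (Phi μ Ka y * ∏ i, lam i ^ y i) := by
    funext y; exact hcls_sft μ Ka lam c y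
  rw [this]
  exact hG.mul_left _

lemma tsum_hcls (μ : K → ℝ) (Ka : I → Finset K) (lam : I → ℝ) (c : I) :
    ∑' x, hcls μ Ka lam c x = lam c * Gf μ Ka lam := by
  rw [← Function.Injective.tsum_eq (sft_injective c)
    (f := hcls μ Ka lam c) (fun x hx =>
      by_contra fun hr => hx (hcls_eq_zero μ Ka lam c hr))]
  unfold Gf
  rw [← tsum_mul_left]
  exact tsum_congr fun y => hcls_sft μ Ka lam c y

lemma DD_le (μ : K → ℝ) (Ka : I → Finset K) [Fintype K] (hμ : ∀ k, 0 ≤ μ k) (x : I → ℕ) :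
    DD μ Ka x ≤ ∑ k, μ k :=
  Finset.sum_le_sum_of_subset_of_nonneg (Finset.subset_univ _) (fun k _ _ => hμ k)

lemma DD_nonneg (μ : K → ℝ) (Ka : I → Finset K) (hμ : ∀ k, 0 ≤ μ k) (x : I → ℕ) :
    0 ≤ DD μ Ka x :=
  Finset.sum_nonneg fun k _ => hμ k

lemma DD_zero (μ : K → ℝ) (Ka : I → Finset K) : DD μ Ka (fun _ => 0) = 0 := by
  unfold DD
  rw [Finset.filter_false_of_mem (by intro i _; simp), Finset.biUnion_empty]
  simp

/-- Pointwise: `D(x) f(x) = N(x) λ^x = ∑_c hcls c x`. -/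
lemma DD_mul_f (μ : K → ℝ) (Ka : I → Finset K) (lam : I → ℝ) (hμ : ∀ k, 0 < μ k)
    (hKa : ∀ c, (Ka c).Nonempty) (x : I → ℕ) :
    DD μ Ka x * (Phi μ Ka x * ∏ i, lam i ^ x i) = ∑ c, hcls μ Ka lam c x := by
  by_cases hx : x = fun _ => 0
  · subst hx
    rw [DD_zero, zero_mul]
    symm
    apply Finset.sum_eq_zero
    intro c _
    simp [hcls]
  · rw [← NN_mul, ← Phi_mul_DD μ Ka hμ hKa hx]
    ring

end BFAux
namespace BFAux
set_option linter.unusedSectionVars false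

variable {I K : Type} [Fintype I] [DecidableEq I] [DecidableEq K]

lemma f_nonneg (μ : K → ℝ) (Ka : I → Finset K) (lam : I → ℝ) (hμ : ∀ k, 0 ≤ μ k)
    (hlam : ∀ c, 0 ≤ lam c) (x : I → ℕ) : 0 ≤ Phi μ Ka x * ∏ i, lam i ^ x i :=
  mul_nonneg (Phi_nonneg μ Ka hμ x) (Finset.prod_nonneg fun i _ => pow_nonneg (hlam i) _)

lemma summable_DDf [Fintype K] (μ : K → ℝ) (Ka : I → Finset K) (lam : I → ℝ)
    (hμ : ∀ k, 0 ≤ μ k) (hlam : ∀ c, 0 ≤ lam c)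
    (hG : Summable (fun x : I → ℕ => Phi μ Ka x * ∏ i, lam i ^ x i)) :
    Summable (fun x : I → ℕ => DD μ Ka x * (Phi μ Ka x * ∏ i, lam i ^ x i)) := by
  apply Summable.of_nonneg_of_le
    (fun x => mul_nonneg (DD_nonneg μ Ka hμ x) (f_nonneg μ Ka lam hμ hlam x))
    (fun x => mul_le_mul_of_nonneg_right (DD_le μ Ka hμ x) (f_nonneg μ Ka lam hμ hlam x))
    (hG.mul_left _)

lemma tsum_DDf (μ : K → ℝ) (Ka : I → Finset K) (lam : I → ℝ)
    (hμ : ∀ k, 0 < μ k) (hKa : ∀ c, (Ka c).Nonempty)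
    (hG : Summable (fun x : I → ℕ => Phi μ Ka x * ∏ i, lam i ^ x i)) :
    ∑' x : I → ℕ, DD μ Ka x * (Phi μ Ka x * ∏ i, lam i ^ x i)
      = (∑ c, lam c) * Gf μ Ka lam := by
  rw [tsum_congr (DD_mul_f μ Ka lam hμ hKa),
    Summable.tsum_finsetSum (fun c _ => summable_hcls μ Ka lam c hG), Finset.sum_mul]
  exact Finset.sum_congr rfl fun c _ => tsum_hcls μ Ka lam c

lemma f_lamMinus (μ : K → ℝ) (Ka : I → Finset K) (lam : I → ℝ) (k : K) (x : I → ℕ) :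
    Phi μ Ka x * ∏ i, (if k ∈ Ka i then (0:ℝ) else lam i) ^ x i
      = if k ∈ (Finset.univ.filter (fun i => 0 < x i)).biUnion Ka then 0
        else Phi μ Ka x * ∏ i, lam i ^ x i := by
  by_cases hk : k ∈ (Finset.univ.filter (fun i => 0 < x i)).biUnion Ka
  · rw [if_pos hk]
    obtain ⟨c, hc, hkc⟩ := Finset.mem_biUnion.1 hk
    simp only [Finset.mem_filter, Finset.mem_univ, true_and] at hc
    rw [Finset.prod_eq_zero (Finset.mem_univ c) (by rw [if_pos hkc, zero_pow (by omega)]),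
      mul_zero]
  · rw [if_neg hk]
    congr 1
    apply Finset.prod_congr rfl
    intro i _
    rcases Nat.eq_zero_or_pos (x i) with h0 | hpos
    · rw [h0, pow_zero, pow_zero]
    · rw [if_neg fun hik =>
        hk (Finset.mem_biUnion.2 ⟨i, Finset.mem_filter.2 ⟨Finset.mem_univ i, hpos⟩, hik⟩)]

lemma filter_not_mem_eq (U : Finset K) [Fintype K] :
    Finset.univ.filter (fun k => k ∉ U) = Finset.univ \ U := by
  ext k; simp

lemma sum_mu_Gk [Fintype K] (μ : K → ℝ) (Ka : I → Finset K) (lam : I → ℝ)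
    (hμ : ∀ k, 0 ≤ μ k) (hlam : ∀ c, 0 ≤ lam c)
    (hG : Summable (fun x : I → ℕ => Phi μ Ka x * ∏ i, lam i ^ x i)) :
    ∑ k, μ k * Gf μ Ka (fun c => if k ∈ Ka c then (0:ℝ) else lam c)
      = ∑' x : I → ℕ, ((∑ k, μ k) - DD μ Ka x) * (Phi μ Ka x * ∏ i, lam i ^ x i) := by
  have hg : ∀ k : K, ∀ x : I → ℕ,
      μ k * (Phi μ Ka x * ∏ i, (if k ∈ Ka i then (0:ℝ) else lam i) ^ x i)
      = (if k ∈ (Finset.univ.filter (fun i => 0 < x i)).biUnion Ka then 0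
          else μ k * (Phi μ Ka x * ∏ i, lam i ^ x i)) := by
    intro k x
    rw [f_lamMinus μ Ka lam k x]
    split <;> simp
  have hsummable : ∀ k : K, Summable (fun x : I → ℕ =>
      (if k ∈ (Finset.univ.filter (fun i => 0 < x i)).biUnion Ka then 0
          else μ k * (Phi μ Ka x * ∏ i, lam i ^ x i))) := by
    intro k
    apply Summable.of_nonneg_of_le ?_ ?_ (hG.mul_left (μ k))
    · intro x
      split
      · exact le_rfl
      · exact mul_nonneg (hμ k) (f_nonneg μ Ka lam hμ hlam x)
    · intro x
      split
      · exact mul_nonneg (hμ k) (f_nonneg μ Ka lam hμ hlam x)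
      · exact le_rfl
  calc ∑ k, μ k * Gf μ Ka (fun c => if k ∈ Ka c then (0:ℝ) else lam c)
      = ∑ k, ∑' x : I → ℕ,
        (if k ∈ (Finset.univ.filter (fun i => 0 < x i)).biUnion Ka then 0
          else μ k * (Phi μ Ka x * ∏ i, lam i ^ x i)) := by
        apply Finset.sum_congr rfl
        intro k _
        rw [Gf, ← tsum_mul_left]
        exact tsum_congr fun x => hg k x
    _ = ∑' x : I → ℕ, ∑ k,
        (if k ∈ (Finset.univ.filter (fun i => 0 < x i)).biUnion Ka then 0
          else μ k * (Phi μ Ka x * ∏ i, lam i ^ x i)) :=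
        (Summable.tsum_finsetSum (fun k _ => hsummable k)).symm
    _ = ∑' x : I → ℕ, ((∑ k, μ k) - DD μ Ka x) * (Phi μ Ka x * ∏ i, lam i ^ x i) := by
        apply tsum_congr
        intro x
        rw [Finset.sum_ite, Finset.sum_const_zero, zero_add, ← Finset.sum_mul,
          filter_not_mem_eq, Finset.sum_sdiff_eq_sub (Finset.subset_univ _)]
        rfl

lemma key_identity [Fintype K] (μ : K → ℝ) (Ka : I → Finset K) (lam : I → ℝ)
    (hμ : ∀ k, 0 < μ k) (hKa : ∀ c, (Ka c).Nonempty) (hlam : ∀ c, 0 ≤ lam c)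
    (hG : Summable (fun x : I → ℕ => Phi μ Ka x * ∏ i, lam i ^ x i)) :
    ∑ k, μ k * Gf μ Ka (fun c => if k ∈ Ka c then (0:ℝ) else lam c)
      = ((∑ k, μ k) - ∑ c, lam c) * Gf μ Ka lam := by
  have hμ' : ∀ k, 0 ≤ μ k := fun k => (hμ k).le
  rw [sum_mu_Gk μ Ka lam hμ' hlam hG]
  have : ∀ x : I → ℕ, ((∑ k, μ k) - DD μ Ka x) * (Phi μ Ka x * ∏ i, lam i ^ x i)
      = (∑ k, μ k) * (Phi μ Ka x * ∏ i, lam i ^ x i)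
        - DD μ Ka x * (Phi μ Ka x * ∏ i, lam i ^ x i) := fun x => sub_mul _ _ _
  rw [tsum_congr this, Summable.tsum_sub (hG.mul_left _) (summable_DDf μ Ka lam hμ' hlam hG),
    tsum_mul_left, tsum_DDf μ Ka lam hμ hKa hG]
  rw [sub_mul]
  rfl

end BFAux
namespace BFAux
set_option linter.unusedSectionVars false

variable {I K : Type} [Fintype I] [DecidableEq I] [DecidableEq K]

/-- States with exactly `n` jobs. -/
def Fn (I : Type) [Fintype I] [DecidableEq I] (n : ℕ) : Finset (I → ℕ) :=
  (Fintype.piFinset (fun _ : I => Finset.range (n+1))).filter (fun x => ∑ i, x i = n)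

lemma mem_Fn {n : ℕ} {x : I → ℕ} : x ∈ Fn I n ↔ ∑ i, x i = n := by
  constructor
  · intro h; exact (Finset.mem_filter.1 h).2
  · intro h
    refine Finset.mem_filter.2 ⟨Fintype.mem_piFinset.2 fun i => Finset.mem_range.2 ?_, h⟩
    have := Finset.single_le_sum (f := x) (fun j _ => Nat.zero_le _) (Finset.mem_univ i)
    omega

lemma Fn_zero : Fn I 0 = {fun _ => 0} := by
  ext x
  rw [mem_Fn, Finset.mem_singleton]
  constructor
  · intro h
    funext i
    have := Finset.single_le_sum (f := x) (fun j _ => Nat.zero_le _) (Finset.mem_univ i)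
    omega
  · rintro rfl; simp

lemma T_zero (μ : K → ℝ) (Ka : I → Finset K) (lam : I → ℝ) :
    ∑ x ∈ Fn I 0, Phi μ Ka x * ∏ i, lam i ^ x i = 1 := by
  rw [Fn_zero, Finset.sum_singleton, Phi_zero]
  simp

lemma sum_hcls_Fn (μ : K → ℝ) (Ka : I → Finset K) (lam : I → ℝ) (c : I) (n : ℕ) :
    ∑ x ∈ Fn I (n+1), hcls μ Ka lam c x
      = lam c * ∑ y ∈ Fn I n, Phi μ Ka y * ∏ i, lam i ^ y i := by
  have himg : (Fn I n).image (sft c) ⊆ Fn I (n+1) := by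
    intro x hx
    obtain ⟨y, hy, rfl⟩ := Finset.mem_image.1 hx
    rw [mem_Fn, sum_sft, mem_Fn.1 hy]
  have hzero : ∀ x ∈ Fn I (n+1), x ∉ (Fn I n).image (sft c) → hcls μ Ka lam c x = 0 := by
    intro x hx hnimg
    unfold hcls
    rw [if_neg]
    intro hpos
    apply hnimg
    refine Finset.mem_image.2 ⟨Function.update x c (x c - 1), mem_Fn.2 ?_, sft_unsft hpos⟩
    have h1 := sum_sft c (Function.update x c (x c - 1))
    rw [sft_unsft hpos, mem_Fn.1 hx] at h1
    omega
  rw [← Finset.sum_subset himg hzero,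
    Finset.sum_image (fun y _ z _ h => sft_injective c h), Finset.mul_sum]
  exact Finset.sum_congr rfl fun y _ => hcls_sft μ Ka lam c y

lemma step_ineq [Fintype K] (μ : K → ℝ) (Ka : I → Finset K) (lam : I → ℝ)
    (hμ : ∀ k, 0 < μ k) (hKa : ∀ c, (Ka c).Nonempty) (hlam : ∀ c, 0 ≤ lam c) (n : ℕ) :
    (∑ c, lam c) * (∑ y ∈ Fn I n, Phi μ Ka y * ∏ i, lam i ^ y i)
      ≤ (∑ k, μ k) * (∑ x ∈ Fn I (n+1), Phi μ Ka x * ∏ i, lam i ^ x i) := by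
  have hμ' : ∀ k, 0 ≤ μ k := fun k => (hμ k).le
  have h1 : (∑ c, lam c) * (∑ y ∈ Fn I n, Phi μ Ka y * ∏ i, lam i ^ y i)
      = ∑ x ∈ Fn I (n+1), DD μ Ka x * (Phi μ Ka x * ∏ i, lam i ^ x i) := by
    rw [Finset.sum_congr rfl (fun x _ => DD_mul_f μ Ka lam hμ hKa x), Finset.sum_comm,
      Finset.sum_mul]
    exact (Finset.sum_congr rfl fun c _ => sum_hcls_Fn μ Ka lam c n).symm
  rw [h1, Finset.mul_sum]
  apply Finset.sum_le_sum
  intro x _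
  exact mul_le_mul_of_nonneg_right (DD_le μ Ka hμ' x) (f_nonneg μ Ka lam hμ' hlam x)

lemma lam_lt_mu [Fintype K] [Nonempty K] (μ : K → ℝ) (Ka : I → Finset K) (lam : I → ℝ)
    (hμ : ∀ k, 0 < μ k) (hKa : ∀ c, (Ka c).Nonempty) (hlam : ∀ c, 0 ≤ lam c)
    (hG : Summable (fun x : I → ℕ => Phi μ Ka x * ∏ i, lam i ^ x i)) :
    ∑ c, lam c < ∑ k, μ k := by
  by_contra hle
  push_neg at hle
  have hM : 0 < ∑ k, μ k := Finset.sum_pos (fun k _ => hμ k) Finset.univ_nonempty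
  set T : ℕ → ℝ := fun n => ∑ x ∈ Fn I n, Phi μ Ka x * ∏ i, lam i ^ x i with hT
  have hTnonneg : ∀ n, 0 ≤ T n := fun n =>
    Finset.sum_nonneg fun x _ => f_nonneg μ Ka lam (fun k => (hμ k).le) hlam x
  have hT1 : ∀ n, 1 ≤ T n := by
    intro n
    induction n with
    | zero => simp only [hT]; rw [T_zero]
    | succ n ih =>
      have hstep := step_ineq μ Ka lam hμ hKa hlam n
      have h2 : (∑ k, μ k) * T n ≤ (∑ k, μ k) * T (n+1) :=
        le_trans (mul_le_mul_of_nonneg_right hle (hTnonneg n)) hstep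
      have := le_of_mul_le_mul_left h2 hM
      linarith
  obtain ⟨N, hN⟩ := exists_nat_gt (∑' x : I → ℕ, Phi μ Ka x * ∏ i, lam i ^ x i)
  have hdisj : (↑(Finset.range N) : Set ℕ).PairwiseDisjoint (Fn I) := by
    intro m _ n _ hmn
    apply Finset.disjoint_left.2
    intro x hxm hxn
    exact hmn (by rw [← mem_Fn.1 hxm, mem_Fn.1 hxn])
  have hsum : ∑ n ∈ Finset.range N, T n ≤ ∑' x : I → ℕ, Phi μ Ka x * ∏ i, lam i ^ x i := by
    rw [hT, ← Finset.sum_biUnion hdisj]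
    exact Summable.sum_le_tsum _ (fun x _ => f_nonneg μ Ka lam (fun k => (hμ k).le) hlam x) hG
  have hNle : (N : ℝ) ≤ ∑ n ∈ Finset.range N, T n := by
    calc (N : ℝ) = ∑ _n ∈ Finset.range N, (1:ℝ) := by simp
    _ ≤ ∑ n ∈ Finset.range N, T n := Finset.sum_le_sum fun n _ => hT1 n
  linarith

end BFAux
/-- **Proposition 5, empty probability of a ring pool.** If `G(λ) < ∞`
then `ψ = (M(K) − Λ(I)) / (∑_k μ_k / ψ_{|k+1..k−1})`, where `ψ_{|k+1..k−1}` is the empty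
probability of the line system obtained by removing server `k`. -/
theorem ring_pool_empty_probability
    (K : ℕ) [NeZero K] (hK : 2 ≤ K)
    (μ : ZMod K → ℝ) (hμ : ∀ k, 0 < μ k)
    (lam : RingCls K → ℝ) (hlam : ∀ c, 0 ≤ lam c)
    (hG : Summable (fun x : RingCls K → ℕ =>
      Phi μ ringKa x * ∏ c, lam c ^ x c)) :
    (Gf μ ringKa lam)⁻¹ =
      ((∑ k, μ k) - ∑ c, lam c) /
        ∑ k : ZMod K, μ k / (Gf μ ringKa (ringLamMinus lam k))⁻¹ := by
  classical
  have hKa : ∀ c : RingCls K, (ringKa c).Nonempty := fun c =>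
    ⟨c.1, Finset.mem_image.2 ⟨0, Finset.mem_range.2 (Nat.succ_pos _), by simp⟩⟩
  have hlt := BFAux.lam_lt_mu μ ringKa lam hμ hKa hlam hG
  have hkey := BFAux.key_identity μ ringKa lam hμ hKa hlam hG
  have hden : ∑ k : ZMod K, μ k / (Gf μ ringKa (ringLamMinus lam k))⁻¹
      = ((∑ k, μ k) - ∑ c, lam c) * Gf μ ringKa lam := by
    rw [← hkey]
    apply Finset.sum_congr rfl
    intro k _
    have : ringLamMinus lam k = fun c => if k ∈ ringKa c then (0:ℝ) else lam c := rfl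
    rw [this, div_eq_mul_inv, inv_inv]
  rw [hden]
  have hGpos : 0 < Gf μ ringKa lam := by
    have h1 := Summable.le_tsum hG (fun _ => 0)
      (fun j _ => BFAux.f_nonneg μ ringKa lam (fun k => (hμ k).le) hlam j)
    rw [BFAux.Phi_zero] at h1
    simp only [pow_zero, Finset.prod_const_one, mul_one] at h1
    have : Gf μ ringKa lam = ∑' x : RingCls K → ℕ, Phi μ ringKa x * ∏ c, lam c ^ x c := rfl
    rw [this]
    linarith
  have hMΛ : 0 < (∑ k, μ k) - ∑ c, lam c := by linarith
  rw [eq_comm, div_eq_iff (ne_of_gt (mul_pos hMΛ hGpos))]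
  field_simp
end
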